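/- arXiv:2410.19555 — 4 statements merged into one kernel-verified Lean document; each statement's English description precedes it below -/
import Mathlib

section
/- For every real c > 0, the ratio n^{⌊c√n⌋} / ((n+1)(n+2)⋯(n+⌊c√n⌋)) converges to exp(−c²/2) as n → ∞. -/
open Filter Real Nat

private lemma sqrt_tendsto_atTop' : Tendsto (fun n : ℕ => Real.sqrt n) atTop atTop := by
  apply tendsto_atTop_atTop.2
  intro b
  refine ⟨⌈b^2⌉₊, fun a ha => ?_⟩
  have h1 : (b^2 : ℝ) ≤ a := le_trans (Nat.le_ceil _) (by exact_mod_cast ha)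
  nlinarith [Real.sq_sqrt (le_trans (sq_nonneg b) h1), Real.sqrt_nonneg (a : ℝ)]

private lemma inv_sqrt_tendsto : Tendsto (fun n : ℕ => 1 / Real.sqrt n) atTop (nhds 0) :=
  (tendsto_inv_atTop_zero.comp sqrt_tendsto_atTop').congr (fun n => (one_div _).symm)

private lemma floor_div_sqrt_tendsto (c : ℝ) (hc : 0 < c) :
    Tendsto (fun n : ℕ => (⌊c * Real.sqrt n⌋₊ : ℝ) / Real.sqrt n) atTop (nhds c) := by
  have hlo : Tendsto (fun n : ℕ => c - 1 / Real.sqrt n) atTop (nhds c) := by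
    simpa using tendsto_const_nhds.sub inv_sqrt_tendsto
  refine tendsto_of_tendsto_of_tendsto_of_le_of_le' hlo tendsto_const_nhds ?_ ?_
  · filter_upwards [eventually_ge_atTop 1] with n hn
    have hs : (0:ℝ) < Real.sqrt n :=
      Real.sqrt_pos.2 (by exact_mod_cast Nat.lt_of_lt_of_le zero_lt_one hn)
    have h := Nat.sub_one_lt_floor (c * Real.sqrt n)
    rw [sub_le_iff_le_add, ← add_div, le_div_iff₀ hs]
    nlinarith
  · filter_upwards [eventually_ge_atTop 1] with n hn
    have hs : (0:ℝ) < Real.sqrt n :=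
      Real.sqrt_pos.2 (by exact_mod_cast Nat.lt_of_lt_of_le zero_lt_one hn)
    rw [div_le_iff₀ hs]
    exact Nat.floor_le (by positivity)

private lemma sum_range_add_one' (k : ℕ) :
    ∑ i ∈ Finset.range k, ((i : ℝ) + 1) = k * (k + 1) / 2 := by
  induction k with
  | zero => simp
  | succ k ih => rw [Finset.sum_range_succ, ih]; push_cast; ring

/-- For every `c > 0`, `n^⌊c√n⌋ / ((n+1)(n+2)⋯(n+⌊c√n⌋)) → exp(−c²/2)` as `n → ∞`. -/
theorem pow_div_ascending_prod_tendsto (c : ℝ) (hc : 0 < c) :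
    Filter.Tendsto
      (fun n : ℕ =>
        (n : ℝ) ^ (⌊c * Real.sqrt n⌋₊) /
          ∏ i ∈ Finset.range ⌊c * Real.sqrt n⌋₊, ((n : ℝ) + i + 1))
      Filter.atTop (nhds (Real.exp (-c ^ 2 / 2))) := by
  set k : ℕ → ℕ := fun n => ⌊c * Real.sqrt n⌋₊ with hk
  set S : ℕ → ℝ := fun n => ∑ i ∈ Finset.range (k n), Real.log (1 + ((i : ℝ) + 1) / n) with hS
  set A : ℕ → ℝ := fun n => (k n : ℝ) * ((k n : ℝ) + 1) / (2 * n) with hA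
  have hkd := floor_div_sqrt_tendsto c hc
  -- A → c²/2
  have hAlim : Tendsto A atTop (nhds (c ^ 2 / 2)) := by
    have h1 : Tendsto (fun n : ℕ => ((k n : ℝ) / Real.sqrt n) *
        ((k n : ℝ) / Real.sqrt n + 1 / Real.sqrt n) / 2) atTop (nhds (c * (c + 0) / 2)) :=
      (hkd.mul (hkd.add inv_sqrt_tendsto)).div_const 2
    have h2 : (c * (c + 0) / 2) = c ^ 2 / 2 := by ring
    rw [h2] at h1
    refine h1.congr' ?_
    filter_upwards [eventually_ge_atTop 1] with n hn
    have hn0 : (0:ℝ) < (n : ℝ) := by exact_mod_cast Nat.lt_of_lt_of_le zero_lt_one hn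
    have hs : (0:ℝ) < Real.sqrt n := Real.sqrt_pos.2 hn0
    have hsq : Real.sqrt n * Real.sqrt n = (n : ℝ) := Real.mul_self_sqrt hn0.le
    simp only [hA]
    rw [← add_div]
    have h3 : (k n : ℝ) / Real.sqrt n * (((k n : ℝ) + 1) / Real.sqrt n) / 2
        = (k n : ℝ) * ((k n : ℝ) + 1) / (2 * (Real.sqrt n * Real.sqrt n)) := by
      field_simp
    rw [h3, hsq]
  -- k³/n² → 0
  have hBlim : Tendsto (fun n : ℕ => (k n : ℝ) ^ 3 / (n : ℝ) ^ 2) atTop (nhds 0) := by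
    refine tendsto_of_tendsto_of_tendsto_of_le_of_le' tendsto_const_nhds
      (by simpa using inv_sqrt_tendsto.const_mul (c^3)) ?_ ?_
    · filter_upwards [eventually_ge_atTop 1] with n hn
      positivity
    · filter_upwards [eventually_ge_atTop 1] with n hn
      have hn0 : (0:ℝ) < (n : ℝ) := by exact_mod_cast Nat.lt_of_lt_of_le zero_lt_one hn
      have hs : (0:ℝ) < Real.sqrt n := Real.sqrt_pos.2 hn0
      have hsq : Real.sqrt n * Real.sqrt n = (n : ℝ) := Real.mul_self_sqrt hn0.le
      have hkb : (k n : ℝ) ≤ c * Real.sqrt n := Nat.floor_le (by positivity)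
      have hkn : (0:ℝ) ≤ (k n : ℝ) := Nat.cast_nonneg _
      have h2 : (Real.sqrt n)^2 = (n:ℝ) := Real.sq_sqrt hn0.le
      rw [← div_eq_mul_inv, div_le_div_iff₀ (by positivity) hs]
      calc (k n : ℝ) ^ 3 * Real.sqrt n ≤ (c * Real.sqrt n) ^ 3 * Real.sqrt n := by gcongr
      _ = c ^ 3 * ((Real.sqrt n)^2)^2 := by ring
      _ = c ^ 3 * (n:ℝ)^2 := by rw [h2]
  -- S → c²/2 by squeeze
  have hSlim : Tendsto S atTop (nhds (c ^ 2 / 2)) := by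
    refine tendsto_of_tendsto_of_tendsto_of_le_of_le'
      (g := fun n => A n - (k n : ℝ) ^ 3 / (n : ℝ) ^ 2) (h := A)
      (by simpa using hAlim.sub hBlim) hAlim ?_ ?_
    · -- lower bound
      filter_upwards [eventually_ge_atTop 1] with n hn
      have hn0 : (0:ℝ) < (n : ℝ) := by exact_mod_cast Nat.lt_of_lt_of_le zero_lt_one hn
      have hterm : ∀ i ∈ Finset.range (k n),
          ((i : ℝ) + 1) / n - (((i : ℝ) + 1) / n) ^ 2 ≤ Real.log (1 + ((i : ℝ) + 1) / n) := by
        intro i _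
        set t : ℝ := ((i : ℝ) + 1) / n with ht
        have ht0 : 0 < t := by positivity
        have h1t : (0:ℝ) < 1 + t := by linarith
        have h := Real.one_sub_inv_le_log_of_pos h1t
        have hu : (1 + t)⁻¹ * (1 + t) = 1 := inv_mul_cancel₀ h1t.ne'
        have key : t - t ^ 2 ≤ 1 - (1 + t)⁻¹ := by nlinarith [inv_pos.2 h1t]
        linarith
      have hsum1 : ∑ i ∈ Finset.range (k n),
          (((i : ℝ) + 1) / n - (((i : ℝ) + 1) / n) ^ 2) ≤ S n :=
        Finset.sum_le_sum hterm
      have hsumA : ∑ i ∈ Finset.range (k n), ((i : ℝ) + 1) / n = A n := by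
        rw [← Finset.sum_div, sum_range_add_one', hA]
        ring
      have hsumB : ∑ i ∈ Finset.range (k n), (((i : ℝ) + 1) / n) ^ 2
          ≤ (k n : ℝ) ^ 3 / (n : ℝ) ^ 2 := by
        calc ∑ i ∈ Finset.range (k n), (((i : ℝ) + 1) / n) ^ 2
            ≤ ∑ _i ∈ Finset.range (k n), ((k n : ℝ) / n) ^ 2 := by
              refine Finset.sum_le_sum fun i hi => ?_
              have : (i : ℝ) + 1 ≤ (k n : ℝ) := by
                exact_mod_cast Nat.succ_le_of_lt (Finset.mem_range.1 hi)
              gcongr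
        _ = (k n : ℝ) * ((k n : ℝ) / n) ^ 2 := by
              rw [Finset.sum_const, Finset.card_range, nsmul_eq_mul]
        _ = (k n : ℝ) ^ 3 / (n : ℝ) ^ 2 := by ring
      have := Finset.sum_sub_distrib (s := Finset.range (k n))
        (f := fun i => ((i : ℝ) + 1) / n) (g := fun i => (((i : ℝ) + 1) / n) ^ 2)
      rw [this, hsumA] at hsum1
      linarith
    · -- upper bound
      filter_upwards [eventually_ge_atTop 1] with n hn
      have hn0 : (0:ℝ) < (n : ℝ) := by exact_mod_cast Nat.lt_of_lt_of_le zero_lt_one hn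
      have hterm : ∀ i ∈ Finset.range (k n),
          Real.log (1 + ((i : ℝ) + 1) / n) ≤ ((i : ℝ) + 1) / n := by
        intro i _
        have ht0 : (0:ℝ) < ((i : ℝ) + 1) / n := by positivity
        have := Real.log_le_sub_one_of_pos (show (0:ℝ) < 1 + ((i : ℝ) + 1) / n by linarith)
        linarith
      have hsumA : ∑ i ∈ Finset.range (k n), ((i : ℝ) + 1) / n = A n := by
        rw [← Finset.sum_div, sum_range_add_one', hA]
        ring
      calc S n ≤ ∑ i ∈ Finset.range (k n), ((i : ℝ) + 1) / n := Finset.sum_le_sum hterm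
      _ = A n := hsumA
  -- conclude via exp and eventual equality
  have hexp : Tendsto (fun n => Real.exp (-(S n))) atTop (nhds (Real.exp (-c ^ 2 / 2))) := by
    have := (Real.continuous_exp.tendsto _).comp hSlim.neg
    simpa [neg_div, Function.comp_def] using this
  refine hexp.congr' ?_
  filter_upwards [eventually_ge_atTop 1] with n hn
  have hn0 : (0:ℝ) < (n : ℝ) := by exact_mod_cast Nat.lt_of_lt_of_le zero_lt_one hn
  calc Real.exp (-(S n))
      = ∏ i ∈ Finset.range (k n), (1 + ((i : ℝ) + 1) / n)⁻¹ := by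
        rw [hS]
        rw [← Finset.sum_neg_distrib, Real.exp_sum]
        refine Finset.prod_congr rfl fun i _ => ?_
        rw [Real.exp_neg, Real.exp_log (by positivity)]
    _ = ∏ i ∈ Finset.range (k n), ((n : ℝ) / ((n : ℝ) + i + 1)) := by
        refine Finset.prod_congr rfl fun i _ => ?_
        rw [eq_div_iff (by positivity), inv_mul_eq_div, div_eq_iff (by positivity)]
        field_simp
        ring
    _ = (n : ℝ) ^ (k n) / ∏ i ∈ Finset.range (k n), ((n : ℝ) + i + 1) := by
        rw [Finset.prod_div_distrib, Finset.prod_const, Finset.card_range]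
end

section
/- Lemma 1 (truncated first moment of the Irwin–Hall density): for every even positive integer n, ∫_0^{n/2} y f_n(y) dy = n/4 − (n^{n+1} / (n+1)!) · (1/2)^{n+1} · Σ_{j=0}^{n/2} (−1)^j C(n,j) (1 − 2j/n)^{n+1}, where f_n(y) = (1/(n−1)!) Σ_{j=0}^{⌊y⌋} (−1)^j C(n,j) (y − j)^{n−1} for y ∈ [0, n]. -/
open Filter Real Nat MeasureTheory

open Finset

private lemma alt_moment (n : ℕ) : ∀ k, k ≤ n →
    ∑ j ∈ Finset.range (n + 1), (-1 : ℝ) ^ j * (n.choose j : ℝ) * (j : ℝ) ^ k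
      = if k = n then (-1 : ℝ) ^ n * (n.factorial : ℝ) else 0 := by
  induction n with
  | zero =>
      intro k hk
      obtain rfl : k = 0 := Nat.le_zero.mp hk
      simp
  | succ n ih =>
      intro k hk
      rcases Nat.eq_zero_or_pos k with rfl | hkpos
      · rw [if_neg (by omega)]
        have h := Int.alternating_sum_range_choose_of_ne (n := n + 1) (Nat.succ_ne_zero n)
        have h' : ((∑ m ∈ Finset.range (n + 1 + 1), ((-1 : ℤ) ^ m * ((n+1).choose m : ℤ)) : ℤ) : ℝ) = 0 := by
          rw [h]; norm_num
        push_cast at h'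
        simpa using h'
      · have hk1 : k - 1 + 1 = k := Nat.succ_pred_eq_of_pos hkpos
        have hshift : ∑ j ∈ Finset.range (n + 1 + 1), (-1:ℝ)^j * ((n+1).choose j : ℝ) * (j:ℝ)^k
            = ∑ i ∈ Finset.range (n + 1), (-1:ℝ)^(i+1) * ((n+1).choose (i+1) : ℝ) * ((i:ℝ)+1)^k := by
          rw [Finset.sum_range_succ']
          simp [zero_pow hkpos.ne']
        have key : ∀ i : ℕ, ((n+1).choose (i+1) : ℝ) * ((i:ℝ)+1) = ((n:ℝ)+1) * (n.choose i : ℝ) := by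
          intro i
          have := (Nat.add_one_mul_choose_eq n i).symm
          exact_mod_cast congrArg (Nat.cast (R := ℝ)) this
        have hstep : ∑ i ∈ Finset.range (n + 1), (-1:ℝ)^(i+1) * ((n+1).choose (i+1) : ℝ) * ((i:ℝ)+1)^k
            = -((n:ℝ)+1) * ∑ i ∈ Finset.range (n + 1), (-1:ℝ)^i * (n.choose i : ℝ) * ((i:ℝ)+1)^(k-1) := by
          rw [Finset.mul_sum]
          refine Finset.sum_congr rfl fun i _ => ?_
          have hik : ((i:ℝ)+1)^k = ((i:ℝ)+1) * ((i:ℝ)+1)^(k-1) := by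
            conv_lhs => rw [← hk1]
            rw [pow_succ]
            ring
          rw [hik, pow_succ]
          calc (-1:ℝ)^i * -1 * ((n+1).choose (i+1) : ℝ) * (((i:ℝ)+1) * ((i:ℝ)+1)^(k-1))
              = -((-1:ℝ)^i * (((n+1).choose (i+1) : ℝ) * ((i:ℝ)+1)) * ((i:ℝ)+1)^(k-1)) := by ring
            _ = -((n:ℝ)+1) * ((-1:ℝ)^i * (n.choose i : ℝ) * ((i:ℝ)+1)^(k-1)) := by rw [key i]; ring
        have hexp : ∀ i : ℕ, ((i:ℝ)+1)^(k-1)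
            = ∑ l ∈ Finset.range k, ((i:ℝ)^l * ((k-1).choose l : ℝ)) := by
          intro i
          have h := add_pow (i:ℝ) 1 (k-1)
          rw [hk1] at h
          simpa using h
        have hswap : ∑ i ∈ Finset.range (n+1), (-1:ℝ)^i * (n.choose i : ℝ) * ((i:ℝ)+1)^(k-1)
            = ∑ l ∈ Finset.range k, ((k-1).choose l : ℝ) *
                ∑ i ∈ Finset.range (n+1), (-1:ℝ)^i * (n.choose i : ℝ) * (i:ℝ)^l := by
          simp_rw [hexp, Finset.mul_sum]
          rw [Finset.sum_comm]
          refine Finset.sum_congr rfl fun l _ => Finset.sum_congr rfl fun i _ => by ring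
        have hval : ∀ l ∈ Finset.range k, ((k-1).choose l : ℝ) *
              (∑ i ∈ Finset.range (n+1), (-1:ℝ)^i * (n.choose i:ℝ) * (i:ℝ)^l)
            = if l = n then ((k-1).choose l : ℝ) * ((-1:ℝ)^n * (n.factorial:ℝ)) else 0 := by
          intro l hl
          rw [ih l (by simp only [Finset.mem_range] at hl; omega)]
          split <;> simp
        rw [hshift, hstep, hswap, Finset.sum_congr rfl hval,
          Finset.sum_ite_eq' (Finset.range k) n]
        by_cases hkn : k = n + 1
        · subst hkn
          rw [if_pos rfl, if_pos (by simp)]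
          simp [Nat.factorial_succ, pow_succ]
          ring
        · rw [if_neg hkn, if_neg (by simp only [Finset.mem_range]; omega)]
          ring

private lemma alt_diff (n : ℕ) (x : ℝ) (hn : 0 < n) :
    ∑ j ∈ Finset.range (n + 1), (-1 : ℝ) ^ j * (n.choose j : ℝ) * (x - (j:ℝ)) ^ n
      = (n.factorial : ℝ) := by
  have hexp : ∀ j : ℕ, (x - (j:ℝ))^n
      = ∑ m ∈ Finset.range (n+1), (-1:ℝ)^(m+n) * x^m * (j:ℝ)^(n-m) * (n.choose m : ℝ) :=
    fun j => sub_pow x (j:ℝ) n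
  calc ∑ j ∈ Finset.range (n + 1), (-1 : ℝ) ^ j * (n.choose j : ℝ) * (x - (j:ℝ)) ^ n
      = ∑ m ∈ Finset.range (n+1), ((-1:ℝ)^(m+n) * x^m * (n.choose m : ℝ)) *
          ∑ j ∈ Finset.range (n+1), (-1:ℝ)^j * (n.choose j : ℝ) * (j:ℝ)^(n-m) := by
        simp_rw [hexp, Finset.mul_sum]
        rw [Finset.sum_comm]
        refine Finset.sum_congr rfl fun m _ => Finset.sum_congr rfl fun j _ => by ring
    _ = ∑ m ∈ Finset.range (n+1), if m = 0 then ((-1:ℝ)^(m+n) * x^m * (n.choose m : ℝ)) *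
          ((-1:ℝ)^n * (n.factorial : ℝ)) else 0 := by
        refine Finset.sum_congr rfl fun m hm => ?_
        rw [alt_moment n (n - m) (Nat.sub_le n m)]
        simp only [Finset.mem_range] at hm
        have : n - m = n ↔ m = 0 := by omega
        rw [if_congr this rfl rfl]
        split <;> simp
    _ = (n.factorial : ℝ) := by
        rw [Finset.sum_ite_eq' (Finset.range (n+1)) 0]
        rw [if_pos (by simp)]
        have : (-1:ℝ)^n * (-1:ℝ)^n = 1 := by
          rw [← pow_add, ← two_mul, pow_mul]; norm_num
        simp only [zero_add, pow_zero, Nat.choose_zero_right, Nat.cast_one]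
        nlinarith [this]

private lemma alt_half (m : ℕ) (hm : 0 < m) :
    ∑ j ∈ Finset.range (m + 1), (-1:ℝ)^j * ((2*m).choose j : ℝ) * ((m:ℝ) - (j:ℝ))^(2*m)
      = ((2*m).factorial : ℝ) / 2 := by
  set n := 2 * m with hn
  have hnpos : 0 < n := by omega
  set s : ℕ → ℝ := fun j => (-1:ℝ)^j * (n.choose j : ℝ) * ((m:ℝ) - (j:ℝ))^n with hs
  have hsymm : ∀ j ∈ Finset.Ico (m+1) (n+1), s j = s (n - j) := by
    intro j hj
    simp only [Finset.mem_Ico] at hj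
    have hjn : j ≤ n := by omega
    simp only [hs]
    rw [Nat.choose_symm hjn, Nat.cast_sub hjn]
    have h1 : (-1:ℝ)^(n-j) = (-1:ℝ)^j := by
      have : (n - j) + j = n := by omega
      have he : Even n := ⟨m, by omega⟩
      have h2 : (-1:ℝ)^(n-j) * (-1:ℝ)^j = 1 := by
        rw [← pow_add, this, he.neg_one_pow]
      have h3 : (-1:ℝ)^j * (-1:ℝ)^j = 1 := by
        rw [← pow_add, ← two_mul, pow_mul]; norm_num
      calc (-1:ℝ)^(n-j) = (-1:ℝ)^(n-j) * ((-1:ℝ)^j * (-1:ℝ)^j) := by rw [h3]; ring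
        _ = ((-1:ℝ)^(n-j) * (-1:ℝ)^j) * (-1:ℝ)^j := by ring
        _ = (-1:ℝ)^j := by rw [h2]; ring
    have h4 : ((m:ℝ) - ((n:ℝ) - (j:ℝ)))^n = ((m:ℝ) - (j:ℝ))^n := by
      have : (m:ℝ) - ((n:ℝ) - (j:ℝ)) = -((m:ℝ) - (j:ℝ)) := by
        have : (n:ℝ) = 2 * m := by push_cast [hn]; ring
        rw [this]; ring
      rw [this]
      exact (Even.neg_pow ⟨m, by omega⟩ _)
    rw [h1, h4]
  have hsm : s m = 0 := by
    simp only [hs]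
    have : ((m:ℝ) - (m:ℝ)) = 0 := by ring
    rw [this, zero_pow hnpos.ne']
    ring
  have hfull : ∑ j ∈ Finset.range (n + 1), s j = (n.factorial : ℝ) := alt_diff n (m:ℝ) hnpos
  have hsplit : ∑ j ∈ Finset.range (n + 1), s j
      = (∑ j ∈ Finset.range (m + 1), s j) + ∑ j ∈ Finset.Ico (m+1) (n+1), s j := by
    rw [Finset.range_eq_Ico, ← Finset.sum_Ico_consecutive _ (by omega : 0 ≤ m + 1) (by omega : m + 1 ≤ n + 1),
      ← Finset.range_eq_Ico]
  have hrefl : ∑ j ∈ Finset.Ico (m+1) (n+1), s j = ∑ j ∈ Finset.range m, s j := by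
    rw [Finset.sum_congr rfl hsymm]
    refine Finset.sum_nbij' (fun j => n - j) (fun j => n - j) ?_ ?_ ?_ ?_ (fun a _ => rfl) <;>
      simp only [Finset.mem_Ico, Finset.mem_range] <;> intro a ha <;> omega
  have hlast : ∑ j ∈ Finset.range (m+1), s j = (∑ j ∈ Finset.range m, s j) + s m :=
    Finset.sum_range_succ s m
  have : (n.factorial : ℝ) = 2 * (∑ j ∈ Finset.range (m + 1), s j) := by
    rw [← hfull, hsplit, hrefl, hlast, hsm]; ring
  linarith [this]


/-- Lemma 1: truncated first moment of the Irwin–Hall density. For even positive `n`,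
`∫_0^{n/2} y f_n(y) dy = n/4 − (n^{n+1}/(n+1)!) (1/2)^{n+1} Σ_{j=0}^{n/2} (−1)^j C(n,j) (1−2j/n)^{n+1}`,
where `f_n(y) = (1/(n−1)!) Σ_{j=0}^{⌊y⌋} (−1)^j C(n,j) (y−j)^{n−1}`. -/
theorem irwin_hall_truncated_first_moment (n : ℕ) (hn : 0 < n) (hev : Even n) :
    (∫ y in (0 : ℝ)..((n : ℝ) / 2),
        y * ((1 / ((n - 1)! : ℝ)) *
          ∑ j ∈ Finset.range (⌊y⌋₊ + 1),
            (-1 : ℝ) ^ j * (n.choose j : ℝ) * (y - (j : ℝ)) ^ (n - 1)))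
      = (n : ℝ) / 4 -
          ((n : ℝ) ^ (n + 1) / ((n + 1)! : ℝ)) * (1 / 2) ^ (n + 1) *
            ∑ j ∈ Finset.range (n / 2 + 1),
              (-1 : ℝ) ^ j * (n.choose j : ℝ) * (1 - 2 * (j : ℝ) / (n : ℝ)) ^ (n + 1) := by
  obtain ⟨m, hm2⟩ := hev
  have hnm : n = 2 * m := by omega
  have hmpos : 0 < m := by omega
  have hdiv : n / 2 = m := by omega
  have hne : (n : ℝ) ≠ 0 := Nat.cast_ne_zero.mpr hn.ne'
  have hne1 : ((n : ℝ) + 1) ≠ 0 := by positivity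
  have hfacne : ((n - 1)! : ℝ) ≠ 0 := Nat.cast_ne_zero.mpr (Nat.factorial_ne_zero _)
  have hfacn : ((n)! : ℝ) = (n : ℝ) * ((n - 1)! : ℝ) := by
    conv_lhs => rw [show n = (n - 1) + 1 from (Nat.succ_pred_eq_of_pos hn).symm]
    rw [Nat.factorial_succ]
    push_cast
    rw [Nat.cast_sub hn]
    push_cast
    ring
  have hfacn1 : (((n + 1))! : ℝ) = ((n : ℝ) + 1) * ((n)! : ℝ) := by
    rw [Nat.factorial_succ]; push_cast; ring
  -- notation
  set c : ℕ → ℝ := fun j => (-1 : ℝ) ^ j * (n.choose j : ℝ) with hc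
  set F : ℝ → ℝ := fun y => y * ((1 / ((n - 1)! : ℝ)) *
      ∑ j ∈ Finset.range (⌊y⌋₊ + 1), c j * (y - (j : ℝ)) ^ (n - 1)) with hF
  set g : ℕ → ℝ → ℝ := fun k y => y * ((1 / ((n - 1)! : ℝ)) *
      ∑ j ∈ Finset.range (k + 1), c j * (y - (j : ℝ)) ^ (n - 1)) with hg
  set G : ℕ → ℝ → ℝ := fun j y =>
      (y - (j : ℝ)) ^ (n + 1) / ((n : ℝ) + 1) + (j : ℝ) * (y - (j : ℝ)) ^ n / (n : ℝ) with hG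
  have hGd : ∀ (j : ℕ) (y : ℝ), HasDerivAt (G j) (y * (y - (j : ℝ)) ^ (n - 1)) y := by
    intro j y
    have h1 : HasDerivAt (fun y : ℝ => (y - (j : ℝ)) ^ (n + 1))
        (((n : ℝ) + 1) * (y - (j : ℝ)) ^ n) y := by
      have := ((hasDerivAt_id y).sub_const (j : ℝ)).fun_pow (n + 1)
      simpa using this
    have h2 : HasDerivAt (fun y : ℝ => (y - (j : ℝ)) ^ n)
        ((n : ℝ) * (y - (j : ℝ)) ^ (n - 1)) y := by
      have := ((hasDerivAt_id y).sub_const (j : ℝ)).fun_pow n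
      simpa using this
    have h := (h1.div_const ((n : ℝ) + 1)).add ((h2.const_mul (j : ℝ)).div_const (n : ℝ))
    refine h.congr_deriv ?_
    have hpow : (y - (j : ℝ)) ^ n = (y - (j : ℝ)) ^ (n - 1) * (y - (j : ℝ)) := by
      conv_lhs => rw [show n = (n - 1) + 1 from (Nat.succ_pred_eq_of_pos hn).symm]
      rw [pow_succ]
    rw [hpow]
    field_simp
    ring
  have hgcont : ∀ k : ℕ, Continuous (g k) := by
    intro k
    exact continuous_id.mul (continuous_const.mul (continuous_finset_sum _ fun j _ =>
      continuous_const.mul ((continuous_id.sub continuous_const).pow _)))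
  have hae : ∀ k : ℕ, ∀ᵐ y : ℝ ∂volume, y ∈ Set.uIoc ((k : ℝ)) ((k : ℝ) + 1) → F y = g k y := by
    intro k
    have h1 : ∀ᵐ y : ℝ ∂volume, y ≠ (k : ℝ) + 1 := by
      rw [ae_iff]
      simp only [not_not]
      rw [Set.setOf_eq_eq_singleton]
      exact measure_singleton _
    filter_upwards [h1] with y hy hmem
    rw [Set.uIoc_of_le (by linarith : (k : ℝ) ≤ (k : ℝ) + 1)] at hmem
    have hky : (k : ℝ) < y := hmem.1
    have hyk : y < (k : ℝ) + 1 := lt_of_le_of_ne hmem.2 hy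
    have hfloor : ⌊y⌋₊ = k := by
      rw [Nat.floor_eq_iff (le_of_lt (lt_of_le_of_lt (Nat.cast_nonneg k) hky))]
      exact ⟨le_of_lt hky, by push_cast; linarith⟩
    simp only [hF, hg, hfloor]
  have hint : ∀ k : ℕ, IntervalIntegrable F volume (k : ℝ) ((k : ℝ) + 1) := by
    intro k
    rw [intervalIntegrable_iff]
    refine (intervalIntegrable_iff.mp ((hgcont k).intervalIntegrable _ _)).congr ?_
    exact Filter.EventuallyEq.symm ((ae_restrict_iff' measurableSet_uIoc).mpr (hae k))
  have hpiece : ∀ k : ℕ, (∫ y in ((k : ℝ))..((k : ℝ) + 1), F y)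
      = ∑ j ∈ Finset.range (k + 1),
          (1 / ((n - 1)! : ℝ)) * c j * (G j ((k : ℝ) + 1) - G j (k : ℝ)) := by
    intro k
    rw [intervalIntegral.integral_congr_ae (hae k)]
    have hgy : ∀ y : ℝ, g k y = ∑ j ∈ Finset.range (k + 1),
        (1 / ((n - 1)! : ℝ)) * c j * (y * (y - (j : ℝ)) ^ (n - 1)) := by
      intro y
      simp only [hg, Finset.mul_sum]
      refine Finset.sum_congr rfl fun j _ => by ring
    rw [show (fun y => g k y) = fun y => ∑ j ∈ Finset.range (k + 1),
        (1 / ((n - 1)! : ℝ)) * c j * (y * (y - (j : ℝ)) ^ (n - 1)) from funext hgy]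
    rw [intervalIntegral.integral_finset_sum
      (f := fun (j : ℕ) (y : ℝ) => (1 / ((n - 1)! : ℝ)) * c j * (y * (y - (j : ℝ)) ^ (n - 1)))
      (fun j _ => ((continuous_const.mul (continuous_id.mul
        ((continuous_id.sub continuous_const).pow _))).intervalIntegrable _ _))]
    refine Finset.sum_congr rfl fun j _ => ?_
    rw [intervalIntegral.integral_const_mul]
    congr 1
    exact intervalIntegral.integral_eq_sub_of_hasDerivAt (fun y _ => hGd j y)
      (((continuous_id.mul ((continuous_id.sub continuous_const).pow _))).intervalIntegrable _ _)
  have hsplit : (∫ y in (0 : ℝ)..((m : ℝ)), F y)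
      = ∑ k ∈ Finset.range m, ∫ y in ((k : ℝ))..((k : ℝ) + 1), F y := by
    have h := intervalIntegral.sum_integral_adjacent_intervals
      (a := fun k : ℕ => (k : ℝ)) (n := m) (μ := volume) (f := F)
      (fun k _ => by push_cast; exact hint k)
    simp only [Nat.cast_zero, Nat.cast_add, Nat.cast_one] at h
    exact h.symm
  have htel : ∀ j ∈ Finset.range m,
      (∑ k ∈ Finset.Ico j m, (1 / ((n - 1)! : ℝ)) * c j * (G j ((k : ℝ) + 1) - G j (k : ℝ)))
        = (1 / ((n - 1)! : ℝ)) * c j * G j (m : ℝ) := by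
    intro j hj
    simp only [Finset.mem_range] at hj
    rw [← Finset.mul_sum]
    congr 1
    calc ∑ k ∈ Finset.Ico j m, (G j ((k : ℝ) + 1) - G j (k : ℝ))
        = ∑ i ∈ Finset.range (m - j),
            ((fun i => G j (((j + i : ℕ) : ℝ))) (i + 1) - (fun i => G j (((j + i : ℕ) : ℝ))) i) := by
          rw [Finset.sum_Ico_eq_sum_range]
          refine Finset.sum_congr rfl fun i _ => ?_
          have h1 : ((j + i : ℕ) : ℝ) + 1 = ((j + (i + 1) : ℕ) : ℝ) := by push_cast; ring
          simp only []
          rw [h1]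
      _ = G j (((j + (m - j) : ℕ)) : ℝ) - G j (((j + 0 : ℕ)) : ℝ) :=
          Finset.sum_range_sub (fun i => G j (((j + i : ℕ) : ℝ))) (m - j)
      _ = G j (m : ℝ) := by
          have h1 : j + (m - j) = m := by omega
          have h2 : G j (((j + 0 : ℕ)) : ℝ) = 0 := by
            simp only [hG, Nat.add_zero, sub_self]
            rw [zero_pow (Nat.succ_ne_zero n), zero_pow hn.ne']
            simp
          rw [h1, h2, sub_zero]
  have hswap : ∑ k ∈ Finset.range m, ∑ j ∈ Finset.range (k + 1),
      (1 / ((n - 1)! : ℝ)) * c j * (G j ((k : ℝ) + 1) - G j (k : ℝ))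
      = ∑ j ∈ Finset.range m, ∑ k ∈ Finset.Ico j m,
      (1 / ((n - 1)! : ℝ)) * c j * (G j ((k : ℝ) + 1) - G j (k : ℝ)) := by
    simp_rw [Finset.range_eq_Ico]
    exact (Finset.sum_Ico_Ico_comm 0 m fun j k =>
      (1 / ((n - 1)! : ℝ)) * c j * (G j ((k : ℝ) + 1) - G j (k : ℝ))).symm
  have hval : (∫ y in (0 : ℝ)..((m : ℝ)), F y)
      = ∑ j ∈ Finset.range m, (1 / ((n - 1)! : ℝ)) * c j * G j (m : ℝ) := by
    rw [hsplit, Finset.sum_congr rfl (fun k _ => hpiece k), hswap]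
    exact Finset.sum_congr rfl htel
  -- extend the sum to m+1
  have hext : ∑ j ∈ Finset.range m, (1 / ((n - 1)! : ℝ)) * c j * G j (m : ℝ)
      = ∑ j ∈ Finset.range (m + 1), (1 / ((n - 1)! : ℝ)) * c j * G j (m : ℝ) := by
    rw [Finset.sum_range_succ]
    have hGmm : G m (m : ℝ) = 0 := by
      simp only [hG, sub_self]
      rw [zero_pow (Nat.succ_ne_zero n), zero_pow hn.ne']
      simp
    rw [hGmm, mul_zero, add_zero]
  set T1 : ℝ := ∑ j ∈ Finset.range (m + 1), c j * ((m : ℝ) - (j : ℝ)) ^ (n + 1) with hT1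
  set T2 : ℝ := ∑ j ∈ Finset.range (m + 1), c j * ((j : ℝ) * ((m : ℝ) - (j : ℝ)) ^ n) with hT2
  have hsum2 : ∑ j ∈ Finset.range (m + 1), (1 / ((n - 1)! : ℝ)) * c j * G j (m : ℝ)
      = (1 / ((n - 1)! : ℝ)) * (1 / ((n : ℝ) + 1)) * T1
        + (1 / ((n - 1)! : ℝ)) * (1 / (n : ℝ)) * T2 := by
    rw [hT1, hT2, Finset.mul_sum, Finset.mul_sum, ← Finset.sum_add_distrib]
    refine Finset.sum_congr rfl fun j _ => ?_
    simp only [hG]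
    ring
  have hT12 : T1 + T2 = (m : ℝ) * ((n ! : ℝ) / 2) := by
    have hhalf := alt_half m hmpos
    rw [← hnm] at hhalf
    calc T1 + T2 = ∑ j ∈ Finset.range (m + 1), (m : ℝ) * (c j * ((m : ℝ) - (j : ℝ)) ^ n) := by
          rw [hT1, hT2, ← Finset.sum_add_distrib]
          refine Finset.sum_congr rfl fun j _ => ?_
          rw [pow_succ]
          ring
      _ = (m : ℝ) * ∑ j ∈ Finset.range (m + 1), c j * ((m : ℝ) - (j : ℝ)) ^ n := by
          rw [Finset.mul_sum]
      _ = (m : ℝ) * ((n ! : ℝ) / 2) := by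
          simp only [hc]
          rw [hhalf]
  have hM : ((n : ℝ) / 2) = (m : ℝ) := by rw [hnm]; push_cast; ring
  have hmne : ((m : ℝ)) ≠ 0 := Nat.cast_ne_zero.mpr hmpos.ne'
  have hRHSsum : ((n : ℝ) ^ (n + 1) / ((n + 1)! : ℝ)) * (1 / 2) ^ (n + 1) *
      (∑ j ∈ Finset.range (n / 2 + 1), c j * (1 - 2 * (j : ℝ) / (n : ℝ)) ^ (n + 1))
      = (1 / ((n + 1)! : ℝ)) * T1 := by
    rw [hdiv, hT1, Finset.mul_sum, Finset.mul_sum]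
    refine Finset.sum_congr rfl fun j _ => ?_
    have hn2 : (n : ℝ) = 2 * (m : ℝ) := by rw [hnm]; push_cast; ring
    have h1 : ((m : ℝ) - (j : ℝ)) ^ (n + 1)
        = (n : ℝ) ^ (n + 1) * ((1 : ℝ) / 2) ^ (n + 1) * (1 - 2 * (j : ℝ) / (n : ℝ)) ^ (n + 1) := by
      rw [← mul_pow, ← mul_pow]
      congr 1
      rw [hn2]
      field_simp
    rw [h1]
    ring
  -- put everything together
  simp only [hF, hc] at hval
  rw [hM]
  simp only [hc] at hRHSsum ⊢
  rw [hval, hext, hsum2, hRHSsum]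
  have hT2' : T2 = (m : ℝ) * ((n ! : ℝ) / 2) - T1 := by linarith [hT12]
  rw [hT2']
  have hm' : (m : ℝ) = (n : ℝ) / 2 := hM.symm
  rw [hm', hfacn1, hfacn]
  field_simp
  ring
end

section
/- For every even positive integer n, ∫_0^{n/2} F_n(y) dy = (1/(n+1)!) · Σ_{j=0}^{n/2} (−1)^j C(n,j) (n/2 − j)^{n+1}, where F_n(y) = (1/n!) Σ_{j=0}^{⌊y⌋} (−1)^j C(n,j) (y − j)^n for y ∈ [0, n]. -/
open Filter Real Nat MeasureTheory

noncomputable def fIH (n : ℕ) (y : ℝ) : ℝ :=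
  (1 / (n ! : ℝ)) * ∑ j ∈ Finset.range (⌊y⌋₊ + 1),
    (-1 : ℝ) ^ j * (n.choose j : ℝ) * (y - (j : ℝ)) ^ n

noncomputable def gIH (n k : ℕ) (y : ℝ) : ℝ :=
  (1 / (n ! : ℝ)) * ∑ j ∈ Finset.range (k + 1),
    (-1 : ℝ) ^ j * (n.choose j : ℝ) * (y - (j : ℝ)) ^ n

lemma gIH_cont (n k : ℕ) : Continuous (gIH n k) := by
  unfold gIH; fun_prop

lemma fIH_ae_eq (n k : ℕ) :
    fIH n =ᵐ[volume.restrict (Set.Ioc (k : ℝ) ((k : ℝ) + 1))] gIH n k := by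
  rw [← Measure.restrict_congr_set MeasureTheory.Ioo_ae_eq_Ioc]
  filter_upwards [self_mem_ae_restrict measurableSet_Ioo] with y hy
  have hfl : ⌊y⌋₊ = k := by
    rw [Nat.floor_eq_iff (le_trans (Nat.cast_nonneg k) hy.1.le)]
    exact ⟨hy.1.le, hy.2⟩
  simp [fIH, gIH, hfl]

lemma fIH_intInt (n k : ℕ) : IntervalIntegrable (fIH n) volume (k : ℝ) ((k : ℝ) + 1) := by
  rw [intervalIntegrable_iff_integrableOn_Ioc_of_le (by linarith : (k:ℝ) ≤ (k:ℝ) + 1)]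
  exact ((gIH_cont n k).integrableOn_Ioc).congr (fIH_ae_eq n k).symm

lemma gIH_int_eq (n k : ℕ) :
    ∫ y in (k : ℝ)..((k : ℝ) + 1), gIH n k y
      = (1 / ((n + 1)! : ℝ)) * ∑ j ∈ Finset.range (k + 1),
          (-1 : ℝ) ^ j * (n.choose j : ℝ) *
            (((k : ℝ) + 1 - j) ^ (n + 1) - ((k : ℝ) - j) ^ (n + 1)) := by
  unfold gIH
  rw [intervalIntegral.integral_const_mul,
    intervalIntegral.integral_finset_sum (fun j _ => by
      apply Continuous.intervalIntegrable; fun_prop)]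
  have hterm : ∀ j ∈ Finset.range (k + 1),
      (∫ y in (k : ℝ)..((k : ℝ) + 1),
        (-1 : ℝ) ^ j * (n.choose j : ℝ) * (y - (j : ℝ)) ^ n)
      = (-1 : ℝ) ^ j * (n.choose j : ℝ) *
          ((((k : ℝ) + 1 - j) ^ (n + 1) - ((k : ℝ) - j) ^ (n + 1)) / (n + 1)) := by
    intro j _
    rw [intervalIntegral.integral_const_mul,
      intervalIntegral.integral_comp_sub_right (fun x => x ^ n) (j : ℝ),
      integral_pow]
  rw [Finset.sum_congr rfl hterm, Finset.mul_sum, Finset.mul_sum]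
  refine Finset.sum_congr rfl fun j _ => ?_
  have h1 : ((n + 1)! : ℝ) = (n + 1) * n ! := by
    rw [Nat.factorial_succ]; push_cast; ring
  have h2 : (n ! : ℝ) ≠ 0 := Nat.cast_ne_zero.mpr n.factorial_ne_zero
  have h3 : ((n : ℝ) + 1) ≠ 0 := by positivity
  rw [h1, show (1:ℝ)/(((n:ℝ)+1) * (n ! : ℝ)) = ((n ! : ℝ))⁻¹ * (((n:ℝ)+1))⁻¹ by
    rw [one_div, mul_inv, mul_comm]]
  ring

lemma fIH_int_eq (n k : ℕ) :
    ∫ y in (k : ℝ)..((k : ℝ) + 1), fIH n y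
      = (1 / ((n + 1)! : ℝ)) * ∑ j ∈ Finset.range (k + 1),
          (-1 : ℝ) ^ j * (n.choose j : ℝ) *
            (((k : ℝ) + 1 - j) ^ (n + 1) - ((k : ℝ) - j) ^ (n + 1)) := by
  rw [← gIH_int_eq n k]
  rw [intervalIntegral.integral_of_le (by linarith : (k:ℝ) ≤ (k:ℝ) + 1),
    intervalIntegral.integral_of_le (by linarith : (k:ℝ) ≤ (k:ℝ) + 1)]
  exact integral_congr_ae (fIH_ae_eq n k)

lemma sum_telescope_IH (c : ℕ → ℝ) (p : ℕ) (hp : 0 < p) (m : ℕ) :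
    ∑ k ∈ Finset.range m, ∑ j ∈ Finset.range (k + 1),
        c j * (((k : ℝ) + 1 - j) ^ p - ((k : ℝ) - j) ^ p)
      = ∑ j ∈ Finset.range (m + 1), c j * ((m : ℝ) - j) ^ p := by
  induction m with
  | zero => simp [zero_pow hp.ne']
  | succ m ih =>
    rw [Finset.sum_range_succ, ih]
    rw [Finset.sum_range_succ (n := m + 1)]
    have hz : c (m + 1) * (((m : ℝ) + 1) - ((m : ℕ) + 1 : ℕ)) ^ p = 0 := by
      push_cast
      rw [show ((m : ℝ) + 1) - ((m : ℝ) + 1) = 0 by ring, zero_pow hp.ne', mul_zero]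
    push_cast at hz ⊢
    rw [hz, add_zero, ← Finset.sum_add_distrib]
    refine Finset.sum_congr rfl fun j _ => ?_
    ring


/-- For even positive `n`,
`∫_0^{n/2} F_n(y) dy = (1/(n+1)!) Σ_{j=0}^{n/2} (−1)^j C(n,j) (n/2 − j)^{n+1}`,
where `F_n(y) = (1/n!) Σ_{j=0}^{⌊y⌋} (−1)^j C(n,j) (y−j)^n`. -/
theorem irwin_hall_cdf_integral (n : ℕ) (hn : 0 < n) (hev : Even n) :
    (∫ y in (0 : ℝ)..((n : ℝ) / 2),
        (1 / (n ! : ℝ)) *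
          ∑ j ∈ Finset.range (⌊y⌋₊ + 1),
            (-1 : ℝ) ^ j * (n.choose j : ℝ) * (y - (j : ℝ)) ^ n)
      = (1 / ((n + 1)! : ℝ)) *
          ∑ j ∈ Finset.range (n / 2 + 1),
            (-1 : ℝ) ^ j * (n.choose j : ℝ) * ((n : ℝ) / 2 - (j : ℝ)) ^ (n + 1) := by
  set m := n / 2 with hm
  have h2 : (2 : ℕ) ∣ n := hev.two_dvd
  have hmn : (m : ℝ) = (n : ℝ) / 2 := by
    have : m * 2 = n := Nat.div_mul_cancel h2
    field_simp
    exact_mod_cast this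
  rw [← hmn]
  have key : (∫ y in (0 : ℝ)..(m : ℝ), fIH n y)
      = ∑ k ∈ Finset.range m, ∫ y in (k : ℝ)..((k : ℝ) + 1), fIH n y := by
    have h := intervalIntegral.sum_integral_adjacent_intervals
      (a := fun k : ℕ => (k : ℝ)) (μ := volume) (n := m) (f := fIH n)
      (fun k _ => by push_cast; exact fIH_intInt n k)
    simp only [Nat.cast_zero, Nat.cast_add, Nat.cast_one] at h
    exact h.symm
  have hint : ∀ k ∈ Finset.range m,
      (∫ y in (k : ℝ)..((k : ℝ) + 1), fIH n y)
        = (1 / ((n + 1)! : ℝ)) * ∑ j ∈ Finset.range (k + 1),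
            (-1 : ℝ) ^ j * (n.choose j : ℝ) *
              (((k : ℝ) + 1 - j) ^ (n + 1) - ((k : ℝ) - j) ^ (n + 1)) :=
    fun k _ => fIH_int_eq n k
  show (∫ y in (0 : ℝ)..(m : ℝ), fIH n y) = _
  rw [key, Finset.sum_congr rfl hint, ← Finset.mul_sum]
  congr 1
  have := sum_telescope_IH (fun j => (-1 : ℝ) ^ j * (n.choose j : ℝ)) (n + 1)
    (Nat.succ_pos n) m
  rw [← this]
end

section
/- For every positive integer n, the series Σ_{j=0}^∞ |j − n| · e^{-n} n^j / j! converges and equals 2 e^{-n} n^{n+1} / n!; that is, the mean absolute deviation of a Poisson(n) random variable about n equals 2 e^{-n} n^{n+1} / n!. -/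
open Filter Real Nat

/-- The mean absolute deviation of a Poisson(n) variable about `n`:
`Σ_{j=0}^∞ |j − n| e^{-n} n^j / j!` converges and equals `2 e^{-n} n^{n+1} / n!`. -/
theorem poisson_mean_abs_deviation (n : ℕ) (hn : 0 < n) :
    HasSum (fun j : ℕ => |(j : ℝ) - (n : ℝ)| * (Real.exp (-(n : ℝ)) * (n : ℝ) ^ j / j !))
      (2 * Real.exp (-(n : ℝ)) * (n : ℝ) ^ (n + 1) / n !) := by
  set f : ℕ → ℝ := fun j => |(j : ℝ) - (n : ℝ)| * (Real.exp (-(n : ℝ)) * (n : ℝ) ^ j / j !)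
    with hf
  set b : ℕ → ℝ := fun j => Real.exp (-(n : ℝ)) * j * (n : ℝ) ^ j / j ! with hb
  have hfact : ∀ j : ℕ, (0 : ℝ) < j ! := fun j => by positivity
  have key : ∀ j : ℕ, b (j + 1) - b j
      = ((n : ℝ) - j) * (Real.exp (-(n : ℝ)) * (n : ℝ) ^ j / j !) := by
    intro j
    have h1 : ((j + 1)! : ℝ) = (j + 1) * j ! := by
      rw [Nat.factorial_succ]; push_cast; ring
    simp only [hb]
    rw [h1]
    have hj : ((j : ℝ) + 1) ≠ 0 := by positivity
    push_cast
    field_simp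
    ring
  -- finite part
  have hsum_fin : ∑ i ∈ Finset.range (n + 1), f i = b (n + 1) := by
    have : ∀ i ∈ Finset.range (n + 1), f i = b (i + 1) - b i := by
      intro i hi
      rw [Finset.mem_range, Nat.lt_succ_iff] at hi
      simp only [hf]
      rw [key]
      congr 1
      rw [abs_sub_comm, abs_of_nonneg]
      simp [sub_nonneg]
      exact_mod_cast hi
    rw [Finset.sum_congr rfl this, Finset.sum_range_sub]
    simp [hb]
  -- tail terms
  have htail_eq : ∀ j : ℕ, f (j + (n + 1)) = b (j + (n + 1)) - b (j + (n + 1) + 1) := by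
    intro j
    have h := key (j + (n + 1))
    simp only [hf]
    have habs : |((j + (n + 1) : ℕ) : ℝ) - (n : ℝ)| = ((j + (n + 1) : ℕ) : ℝ) - (n : ℝ) := by
      rw [abs_of_nonneg]
      push_cast; linarith
    rw [habs]
    have : ((j + (n + 1) : ℕ) : ℝ) - (n : ℝ) = -(((n : ℝ)) - ((j + (n + 1) : ℕ) : ℝ)) := by ring
    rw [this, neg_mul, ← h]
    ring
  -- b tends to 0
  have hb0 : Tendsto b atTop (nhds 0) := by
    have h1 : Tendsto (fun k : ℕ => (n : ℝ) ^ k / k !) atTop (nhds 0) :=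
      FloorSemiring.tendsto_pow_div_factorial_atTop (n : ℝ)
    have h2 : Tendsto (fun k : ℕ => b (k + 1)) atTop (nhds 0) := by
      have : ∀ k : ℕ, b (k + 1) = (Real.exp (-(n : ℝ)) * n) * ((n : ℝ) ^ k / k !) := by
        intro k
        simp only [hb]
        rw [Nat.factorial_succ]
        push_cast
        have hk : ((k : ℝ) + 1) ≠ 0 := by positivity
        field_simp
        ring
      simp only [this]
      simpa using h1.const_mul (Real.exp (-(n : ℝ)) * n)
    rw [tendsto_add_atTop_iff_nat 1] at h2
    exact h2
  -- tail HasSum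
  have hnonneg : ∀ j : ℕ, 0 ≤ f j := by
    intro j; rw [hf]; positivity
  have htail : HasSum (fun j => f (j + (n + 1))) (b (n + 1)) := by
    rw [hasSum_iff_tendsto_nat_of_nonneg (fun j => hnonneg _)]
    have hps : ∀ N : ℕ, ∑ j ∈ Finset.range N, f (j + (n + 1))
        = b (n + 1) - b (N + (n + 1)) := by
      intro N
      calc ∑ j ∈ Finset.range N, f (j + (n + 1))
          = ∑ j ∈ Finset.range N, ((fun k => b (k + (n + 1))) j
              - (fun k => b (k + (n + 1))) (j + 1)) := by
            refine Finset.sum_congr rfl fun j _ => ?_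
            rw [htail_eq]
            simp only []
            congr 2
            omega
        _ = b (0 + (n + 1)) - b (N + (n + 1)) := Finset.sum_range_sub' _ _
        _ = b (n + 1) - b (N + (n + 1)) := by norm_num
    simp only [hps]
    have : Tendsto (fun N : ℕ => b (N + (n + 1))) atTop (nhds 0) := by
      rwa [tendsto_add_atTop_iff_nat (n + 1)]
    simpa using tendsto_const_nhds.sub this
  have := (hasSum_nat_add_iff (n + 1)).mp htail
  rw [hsum_fin] at this
  have hbn : b (n + 1) + b (n + 1) = 2 * Real.exp (-(n : ℝ)) * (n : ℝ) ^ (n + 1) / n ! := by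
    simp only [hb]
    rw [Nat.factorial_succ]
    push_cast
    have hn1 : ((n : ℝ) + 1) ≠ 0 := by positivity
    field_simp
    ring
  rwa [hbn] at this
end
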